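/- Let i ∈ {1, 2, …, k/2} and let v be a vertex of M_k(q). Let ON_i(v) be the set of vertices w such that v → w is an edge of color i. Then the induced edge-colored subgraph of M_k(q) on ON_i(v) is isomorphic to the multicolor k-th power Paley tournament P_k(q): there exists a bijection φ : ON_i(v) → F_q such that for all u, w ∈ ON_i(v) and all s ∈ {1, …, k/2}, u → w is an edge of color s in M_k(q) if and only if φ(w) − φ(u) ∈ S_{k,s}. -/

import Mathlib

/-- `S_k = ⟨ω^k⟩`, the set of nonzero `k`-th power residues of `F`
(for `ω` a primitive element of the finite field `F`). -/
def Sk {F : Type} [Field F] (ω : F) (k : ℕ) : Set F :=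
  {x | ∃ n : ℕ, x = ω ^ (k * n)}

/-- `S_{k,0} = {0}` and `S_{k,i} = ω^(i-1) • S_k` for `i ≥ 1`. -/
def Ski {F : Type} [Field F] (ω : F) (k : ℕ) : ℕ → Set F
  | 0 => {0}
  | (i + 1) => {x | ∃ n : ℕ, x = ω ^ i * ω ^ (k * n)}

/-- The vertex set of the Mathon-type digraph `M_k(q)`: equivalence classes of
`X = (F × F) \ {(0,0)}` under `(a,b) ~ (ag,bg)` for `g ∈ S_k`. -/
def Vtx (F : Type) [Field F] (ω : F) (k : ℕ) : Type :=
  Quot (fun p q : {p : F × F // p ≠ (0, 0)} =>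
    ∃ g ∈ Sk ω k, q.1 = (p.1.1 * g, p.1.2 * g))

/-- The equivalence class `[a, b]` of a nonzero pair `(a, b)`. -/
def vmk {F : Type} [Field F] (ω : F) (k : ℕ) (p : {p : F × F // p ≠ (0, 0)}) :
    Vtx F ω k :=
  Quot.mk _ p

/-- `[a,b] → [c,d]` is an edge of color `i` in `M_k(q)` iff `bc - ad ∈ S_{k,i}`
(well-defined since `g S_{k,i} = S_{k,i}` for `g ∈ S_k`). -/
def Edge {F : Type} [Field F] (ω : F) (k : ℕ) (u v : Vtx F ω k) (i : ℕ) : Prop :=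
  ∃ p q : {p : F × F // p ≠ (0, 0)},
    u = vmk ω k p ∧ v = vmk ω k q ∧
      p.1.2 * q.1.1 - p.1.1 * q.1.2 ∈ Ski ω k i

/-- For `1 ≤ i ≤ k/2` and any vertex `v` of `M_k(q)`, the induced edge-colored
subgraph on the color-`i` out-neighborhood `ON_i(v)` is isomorphic to the
multicolor `k`-th power Paley tournament `P_k(q)`: there is a bijection
`φ : ON_i(v) → F_q` such that `u → w` has color `s` in `M_k(q)` iff
`φ(w) - φ(u) ∈ S_{k,s}`. -/
theorem stmt_17 (k : ℕ) (hk2 : 2 ≤ k) (hke : Even k)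
    (F : Type) [Field F] [Fintype F]
    (hq : Fintype.card F % (2 * k) = k + 1)
    (ω : F) (hω : ∀ x : F, x ≠ 0 → ∃ n : ℕ, x = ω ^ n) :
    ∀ i : ℕ, 1 ≤ i → i ≤ k / 2 →
      ∀ v : Vtx F ω k,
        ∃ φ : {w : Vtx F ω k // Edge ω k v w i} → F,
          Function.Bijective φ ∧
          ∀ u w : {w : Vtx F ω k // Edge ω k v w i},
            ∀ s : ℕ, 1 ≤ s → s ≤ k / 2 →
              (Edge ω k u.1 w.1 s ↔ φ w - φ u ∈ Ski ω k s) := by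
  intro i hi1 hi2 v
  obtain ⟨j, rfl⟩ : ∃ j, i = j + 1 := ⟨i - 1, (Nat.succ_pred_eq_of_pos hi1).symm⟩
  -- basic facts about the field and ω
  have hc3 : 3 ≤ Fintype.card F := by
    have h1 : k + 1 ≤ Fintype.card F := hq ▸ Nat.mod_le _ _
    omega
  have hω0 : ω ≠ 0 := by
    intro h0
    have h01 : ∀ x : F, x = 0 ∨ x = 1 := by
      intro x
      by_cases hx : x = 0
      · exact Or.inl hx
      · obtain ⟨n, hn⟩ := hω x hx
        cases n with
        | zero => right; simpa using hn
        | succ m => exact absurd (by simp [h0, hn, pow_succ]) hx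
    have hle : Fintype.card F ≤ 2 := by
      have hs : Function.Surjective (fun b : Bool => if b then (1 : F) else 0) := by
        intro x
        rcases h01 x with h | h
        · exact ⟨false, h.symm⟩
        · exact ⟨true, h.symm⟩
      simpa using Fintype.card_le_of_surjective _ hs
    omega
  have hcyc : ω ^ (Fintype.card F - 1) = 1 := FiniteField.pow_card_sub_one_eq_one ω hω0
  have hSkInv : ∀ g ∈ Sk ω k, ∃ g' ∈ Sk ω k, g * g' = 1 := by
    rintro g ⟨n, rfl⟩
    refine ⟨ω ^ (k * (n * (Fintype.card F - 2))), ⟨n * (Fintype.card F - 2), rfl⟩, ?_⟩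
    rw [← pow_add]
    have he : k * n + k * (n * (Fintype.card F - 2)) = (Fintype.card F - 1) * (k * n) := by
      have h2 : Fintype.card F - 1 = 1 + (Fintype.card F - 2) := by omega
      rw [h2]; ring
    rw [he, pow_mul, hcyc, one_pow]
  have hSkMul : ∀ g ∈ Sk ω k, ∀ h ∈ Sk ω k, g * h ∈ Sk ω k := by
    rintro g ⟨n, rfl⟩ h ⟨m, rfl⟩
    exact ⟨n + m, by rw [Nat.mul_add, pow_add]⟩
  have hSkiMul : ∀ s x, x ∈ Ski ω k s → ∀ g ∈ Sk ω k, x * g ∈ Ski ω k s := by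
    intro s x hx g hg
    cases s with
    | zero =>
        simp only [Ski, Set.mem_singleton_iff] at hx ⊢
        rw [hx, zero_mul]
    | succ m =>
        obtain ⟨n, rfl⟩ := hx
        obtain ⟨n', rfl⟩ := hg
        exact ⟨n + n', by rw [Nat.mul_add, pow_add]; ring⟩
  have hSkiDiv : ∀ s x, ∀ g ∈ Sk ω k, x * g ∈ Ski ω k s → x ∈ Ski ω k s := by
    intro s x g hg h
    obtain ⟨g', hg', hgg'⟩ := hSkInv g hg
    have := hSkiMul s _ h g' hg'
    rwa [mul_assoc, hgg', mul_one] at this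
  -- the relation defining Vtx is an equivalence
  have hrequiv : Equivalence (fun p q : {p : F × F // p ≠ (0, 0)} =>
      ∃ g ∈ Sk ω k, q.1 = (p.1.1 * g, p.1.2 * g)) := by
    constructor
    · intro p; exact ⟨1, ⟨0, by simp⟩, by simp⟩
    · rintro p q ⟨g, hg, hpq⟩
      obtain ⟨g', hg', hgg'⟩ := hSkInv g hg
      have h1 : q.1.1 = p.1.1 * g := by rw [hpq]
      have h2 : q.1.2 = p.1.2 * g := by rw [hpq]
      refine ⟨g', hg', ?_⟩
      rw [h1, h2, mul_assoc, mul_assoc, hgg', mul_one, mul_one]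
    · rintro p q t ⟨g, hg, hpq⟩ ⟨g2, hg2, hqt⟩
      have h1 : q.1.1 = p.1.1 * g := by rw [hpq]
      have h2 : q.1.2 = p.1.2 * g := by rw [hpq]
      refine ⟨g * g2, hSkMul g hg g2 hg2, ?_⟩
      rw [hqt, h1, h2]
      simp [mul_assoc]
  have hrel : ∀ p q : {p : F × F // p ≠ (0, 0)}, vmk ω k p = vmk ω k q →
      ∃ g ∈ Sk ω k, q.1 = (p.1.1 * g, p.1.2 * g) :=
    fun p q h => hrequiv.eqvGen_iff.mp (Quot.eqvGen_exact h)
  have hmk : ∀ p q : {p : F × F // p ≠ (0, 0)},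
      (∃ g ∈ Sk ω k, q.1 = (p.1.1 * g, p.1.2 * g)) → vmk ω k p = vmk ω k q :=
    fun p q h => Quot.sound h
  -- fix a representative of v
  obtain ⟨p₀, hp₀⟩ := Quot.exists_rep v
  have hab : ¬(p₀.1.1 = 0 ∧ p₀.1.2 = 0) := by
    rintro ⟨h1, h2⟩
    exact p₀.2 (Prod.ext h1 h2)
  have hene : (ω ^ j : F) ≠ 0 := pow_ne_zero _ hω0
  have hee : (ω ^ j)⁻¹ * ω ^ j = (1 : F) := inv_mul_cancel₀ hene
  obtain ⟨c₀, d₀, hcd⟩ : ∃ c₀ d₀ : F, p₀.1.2 * c₀ - p₀.1.1 * d₀ = ω ^ j := by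
    by_cases hb : p₀.1.2 = 0
    · have ha : p₀.1.1 ≠ 0 := fun h => hab ⟨h, hb⟩
      exact ⟨0, -(ω ^ j / p₀.1.1), by field_simp [hb]; ring⟩
    · exact ⟨ω ^ j / p₀.1.2, 0, by field_simp; ring⟩
  set P : F → F × F := fun x => (c₀ - (ω ^ j)⁻¹ * x * p₀.1.1, d₀ - (ω ^ j)⁻¹ * x * p₀.1.2)
    with hP
  have hPval : ∀ x, p₀.1.2 * (P x).1 - p₀.1.1 * (P x).2 = ω ^ j := by
    intro x
    simp only [hP]
    linear_combination hcd
  have hPne : ∀ x, P x ≠ (0, 0) := by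
    intro x h
    apply hene
    have h1 : (P x).1 = 0 := by rw [h]
    have h2 : (P x).2 = 0 := by rw [h]
    rw [← hPval x, h1, h2]; ring
  have hedgeval : ∀ x y, (P x).2 * (P y).1 - (P x).1 * (P y).2 = y - x := by
    intro x y
    simp only [hP]
    linear_combination ((ω ^ j)⁻¹ * (y - x)) * hcd + (y - x) * hee
  have hmem : ∀ x : F, Edge ω k v (vmk ω k ⟨P x, hPne x⟩) (j + 1) := by
    intro x
    refine ⟨p₀, ⟨P x, hPne x⟩, hp₀.symm, rfl, ?_⟩
    refine ⟨0, ?_⟩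
    rw [hPval x]; simp
  set Ψ : F → {w : Vtx F ω k // Edge ω k v w (j + 1)} :=
    fun x => ⟨vmk ω k ⟨P x, hPne x⟩, hmem x⟩ with hΨ
  have hinj : Function.Injective Ψ := by
    intro x y h
    have h' : vmk ω k ⟨P x, hPne x⟩ = vmk ω k ⟨P y, hPne y⟩ := congrArg Subtype.val h
    obtain ⟨g, hg, hPg⟩ := hrel _ _ h'
    have h1 : (P y).1 = (P x).1 * g := congrArg Prod.fst hPg
    have h2 : (P y).2 = (P x).2 * g := congrArg Prod.snd hPg
    have hg1 : g = 1 := by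
      have hE : ω ^ j * g = ω ^ j * 1 := by
        rw [mul_one]
        calc ω ^ j * g = (p₀.1.2 * (P x).1 - p₀.1.1 * (P x).2) * g := by rw [hPval x]
          _ = p₀.1.2 * (P y).1 - p₀.1.1 * (P y).2 := by rw [h1, h2]; ring
          _ = ω ^ j := hPval y
      exact mul_left_cancel₀ hene hE
    rw [hg1, mul_one] at h1 h2
    simp only [hP] at h1 h2
    have ha : p₀.1.1 * (y - x) = 0 := by
      have := mul_left_cancel₀ (inv_ne_zero hene)
        (show (ω ^ j)⁻¹ * (y * p₀.1.1) = (ω ^ j)⁻¹ * (x * p₀.1.1) by linear_combination -h1)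
      linear_combination this
    have hb : p₀.1.2 * (y - x) = 0 := by
      have := mul_left_cancel₀ (inv_ne_zero hene)
        (show (ω ^ j)⁻¹ * (y * p₀.1.2) = (ω ^ j)⁻¹ * (x * p₀.1.2) by linear_combination -h2)
      linear_combination this
    by_contra hxy
    have hyx : y - x ≠ 0 := sub_ne_zero.mpr (Ne.symm hxy)
    exact hab ⟨by rcases mul_eq_zero.mp ha with h | h; exact h; exact absurd h hyx,
      by rcases mul_eq_zero.mp hb with h | h; exact h; exact absurd h hyx⟩
  have hsurj : Function.Surjective Ψ := by
    rintro ⟨w, hw⟩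
    obtain ⟨p, q, hvp, hwq, hval⟩ := hw
    obtain ⟨g₀, hg₀, hpg⟩ := hrel p₀ p (hp₀.trans hvp)
    have hp1 : p.1.1 = p₀.1.1 * g₀ := congrArg Prod.fst hpg
    have hp2 : p.1.2 = p₀.1.2 * g₀ := congrArg Prod.snd hpg
    have hval' : (p₀.1.2 * q.1.1 - p₀.1.1 * q.1.2) * g₀ ∈ Ski ω k (j + 1) := by
      have hrw : (p₀.1.2 * q.1.1 - p₀.1.1 * q.1.2) * g₀
          = p.1.2 * q.1.1 - p.1.1 * q.1.2 := by
        rw [hp1, hp2]; ring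
      rw [hrw]; exact hval
    obtain ⟨n, hn⟩ := hSkiDiv (j + 1) _ g₀ hg₀ hval'
    obtain ⟨g', hg', hgg'⟩ := hSkInv (ω ^ (k * n)) ⟨n, rfl⟩
    have hq'val : p₀.1.2 * (q.1.1 * g') - p₀.1.1 * (q.1.2 * g') = ω ^ j := by
      linear_combination g' * hn + ω ^ j * hgg'
    have hq'ne : (q.1.1 * g', q.1.2 * g') ≠ (0, 0) := by
      intro h
      apply hene
      have h1 : q.1.1 * g' = 0 := congrArg Prod.fst h
      have h2 : q.1.2 * g' = 0 := congrArg Prod.snd h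
      rw [← hq'val, h1, h2]; ring
    have hwq' : w = vmk ω k ⟨(q.1.1 * g', q.1.2 * g'), hq'ne⟩ := by
      rw [hwq]
      exact hmk q _ ⟨g', hg', rfl⟩
    obtain ⟨t, ht1, ht2⟩ : ∃ t : F, q.1.1 * g' = c₀ + t * p₀.1.1 ∧
        q.1.2 * g' = d₀ + t * p₀.1.2 := by
      by_cases ha : p₀.1.1 = 0
      · have hb : p₀.1.2 ≠ 0 := fun h => hab ⟨ha, h⟩
        refine ⟨(q.1.2 * g' - d₀) / p₀.1.2, ?_, by field_simp; ring⟩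
        have hbc : p₀.1.2 * (q.1.1 * g') = p₀.1.2 * c₀ := by
          linear_combination hq'val - hcd + (q.1.2 * g' - d₀) * ha
        rw [ha, mul_zero, add_zero]
        exact mul_left_cancel₀ hb hbc
      · refine ⟨(q.1.1 * g' - c₀) / p₀.1.1, by field_simp; ring, ?_⟩
        have key2 : p₀.1.1 * (q.1.2 * g')
            = p₀.1.1 * d₀ + (q.1.1 * g' - c₀) * p₀.1.2 := by
          linear_combination hcd - hq'val
        have key3 : p₀.1.1 * (d₀ + (q.1.1 * g' - c₀) / p₀.1.1 * p₀.1.2)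
            = p₀.1.1 * d₀ + (q.1.1 * g' - c₀) * p₀.1.2 := by
          field_simp
        exact mul_left_cancel₀ ha (key2.trans key3.symm)
    refine ⟨-(ω ^ j * t), ?_⟩
    apply Subtype.ext
    show vmk ω k ⟨P (-(ω ^ j * t)), hPne _⟩ = w
    have hPq : P (-(ω ^ j * t)) = (q.1.1 * g', q.1.2 * g') := by
      simp only [hP]
      rw [ht1, ht2]
      refine Prod.ext ?_ ?_
      · show c₀ - (ω ^ j)⁻¹ * -(ω ^ j * t) * p₀.1.1 = c₀ + t * p₀.1.1
        linear_combination (t * p₀.1.1) * hee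
      · show d₀ - (ω ^ j)⁻¹ * -(ω ^ j * t) * p₀.1.2 = d₀ + t * p₀.1.2
        linear_combination (t * p₀.1.2) * hee
    calc vmk ω k ⟨P (-(ω ^ j * t)), hPne _⟩
        = vmk ω k ⟨(q.1.1 * g', q.1.2 * g'), hq'ne⟩ :=
          congrArg (vmk ω k) (Subtype.ext hPq)
      _ = w := hwq'.symm
  have hbij : Function.Bijective Ψ := ⟨hinj, hsurj⟩
  refine ⟨fun w => (Equiv.ofBijective Ψ hbij).symm w,
    (Equiv.ofBijective Ψ hbij).symm.bijective, ?_⟩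
  intro u w s hs1 hs2
  set x := (Equiv.ofBijective Ψ hbij).symm u with hx
  set y := (Equiv.ofBijective Ψ hbij).symm w with hy
  have hu : Ψ x = u := (Equiv.ofBijective Ψ hbij).apply_symm_apply u
  have hwv : Ψ y = w := (Equiv.ofBijective Ψ hbij).apply_symm_apply w
  have hu1 : u.1 = vmk ω k ⟨P x, hPne x⟩ := (congrArg Subtype.val hu).symm
  have hw1 : w.1 = vmk ω k ⟨P y, hPne y⟩ := (congrArg Subtype.val hwv).symm
  constructor
  · rintro ⟨p, q, hup, hwq, hval⟩
    obtain ⟨g, hg, hpg⟩ := hrel _ p (hu1.symm.trans hup)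
    obtain ⟨g2, hg2, hqg⟩ := hrel _ q (hw1.symm.trans hwq)
    have hp1 : p.1.1 = (P x).1 * g := congrArg Prod.fst hpg
    have hp2 : p.1.2 = (P x).2 * g := congrArg Prod.snd hpg
    have hq1 : q.1.1 = (P y).1 * g2 := congrArg Prod.fst hqg
    have hq2 : q.1.2 = (P y).2 * g2 := congrArg Prod.snd hqg
    have hvv : (y - x) * (g * g2) ∈ Ski ω k s := by
      have hrw : (y - x) * (g * g2) = p.1.2 * q.1.1 - p.1.1 * q.1.2 := by
        rw [hp1, hp2, hq1, hq2, ← hedgeval x y]; ring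
      rw [hrw]; exact hval
    exact hSkiDiv s _ (g * g2) (hSkMul g hg g2 hg2) hvv
  · intro hy'
    exact ⟨⟨P x, hPne x⟩, ⟨P y, hPne y⟩, hu1, hw1, by rw [hedgeval x y]; exact hy'⟩
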